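/- Let M be an n × n matrix over Z/2Z with n ≥ 1, let P = charpoly M, let j be a natural number, and let Q = X^j %ₘ P with coefficients α_i = Q.coeff i (so α_i = 0 for i ≥ n). Then for every row vector v : Fin n → ZMod 2, the state after j steps satisfies v ·ᵥ M^j = ∑_{i=0}^{n-1} α_i • (v ·ᵥ M^i), where v ·ᵥ A denotes the vector-matrix product Matrix.vecMul v A. -/

import Mathlib

open Polynomial

/-- Jump-ahead formula: with `Q = X^j %ₘ charpoly M` and `α_i = Q.coeff i`,
for every row vector `v` one has `v ⬝ M^j = ∑_{i<n} α_i • (v ⬝ M^i)`. -/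
theorem jump_ahead_formula
    (n : ℕ) (hn : 1 ≤ n) (M : Matrix (Fin n) (Fin n) (ZMod 2)) (j : ℕ)
    (Q : Polynomial (ZMod 2)) (hQ : Q = (Polynomial.X ^ j : Polynomial (ZMod 2)) %ₘ M.charpoly)
    (v : Fin n → ZMod 2) :
    Matrix.vecMul v (M ^ j)
      = ∑ i ∈ Finset.range n, Q.coeff i • Matrix.vecMul v (M ^ i) := by
  have hmonic : (M.charpoly).Monic := M.charpoly_monic
  have hdeg : Q.degree < (M.charpoly).degree := by
    rw [hQ]; exact degree_modByMonic_lt _ hmonic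
  have hdegn : Q.natDegree < n := by
    rcases eq_or_ne Q 0 with h0 | h0
    · simp [h0]; exact hn
    · have := (degree_eq_natDegree h0) ▸ hdeg
      rw [M.charpoly_degree_eq_dim] at this
      simpa using this
  have hMj : M ^ j = Polynomial.aeval M Q := by
    have h := Polynomial.modByMonic_add_div (X ^ j : Polynomial (ZMod 2)) M.charpoly
    have := congrArg (Polynomial.aeval M) h
    simpa [Matrix.aeval_self_charpoly, ← hQ] using this.symm
  have hsum : M ^ j = ∑ i ∈ Finset.range n, Q.coeff i • M ^ i := by
    rw [hMj, Polynomial.aeval_eq_sum_range' (lt_of_lt_of_le hdegn (Nat.le_succ n))]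
    rw [Finset.sum_range_succ]
    have : Q.coeff n = 0 := Polynomial.coeff_eq_zero_of_natDegree_lt hdegn
    simp [this]
  rw [hsum]
  funext k
  simp only [Matrix.vecMul, dotProduct, Finset.sum_apply, Matrix.smul_apply,
    Matrix.sum_apply, Pi.smul_apply, smul_eq_mul, Finset.mul_sum, Finset.sum_mul]
  rw [Finset.sum_comm]
  exact Finset.sum_congr rfl fun _ _ => Finset.sum_congr rfl fun _ _ => by ring
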